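/- (Example 1, inequality (4.16)) Let δ ∈ (0, 1/2) and ν ∈ (−1+2δ, 1−2δ). Then 1/|log(1−δ)| > 1/|log(1 − 2δ/(1+ν))| + 1/|log(1 − 2δ/(1−ν))|. -/

import Mathlib

/-- Padé-type lower bound: `2x/(2-x) ≤ -log(1-x)` for `x ∈ (0,1)`. -/
lemma aux_logB {x : ℝ} (hx0 : 0 < x) (hx1 : x < 1) :
    2 * x / (2 - x) ≤ -Real.log (1 - x) := by
  set f : ℝ → ℝ := fun t => -Real.log (1 - t) - 2 * t / (2 - t) with hf
  have hderiv : ∀ t ∈ Set.Ioo (0:ℝ) x, HasDerivAt f (1/(1-t) - 4/(2-t)^2) t := by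
    intro t ht
    have ht1 : (0:ℝ) < 1 - t := by linarith [ht.2]
    have ht2 : (0:ℝ) < 2 - t := by linarith [ht.2]
    have h1 : HasDerivAt (fun t : ℝ => 1 - t) (-1) t := by
      simpa using (hasDerivAt_id t).const_sub 1
    have h2 : HasDerivAt (fun t : ℝ => Real.log (1 - t)) (-1/(1-t)) t := h1.log (ne_of_gt ht1)
    have h3 : HasDerivAt (fun t : ℝ => 2 * t) 2 t := by
      simpa using (hasDerivAt_id t).const_mul 2
    have h4 : HasDerivAt (fun t : ℝ => 2 - t) (-1) t := by
      simpa using (hasDerivAt_id t).const_sub 2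
    have h5 : HasDerivAt (fun t : ℝ => 2 * t / (2 - t))
        ((2 * (2 - t) - 2 * t * (-1)) / (2 - t)^2) t := h3.div h4 (ne_of_gt ht2)
    have h6 := (h2.neg).sub h5
    convert h6 using 1
    have e1 : (1:ℝ) - t ≠ 0 := ne_of_gt ht1
    have e2 : (2:ℝ) - t ≠ 0 := ne_of_gt ht2
    any_goals rfl
    all_goals try ring
    all_goals left
    all_goals ring
  have hcont : ContinuousOn f (Set.Icc 0 x) := by
    apply ContinuousOn.sub
    · apply ContinuousOn.neg
      apply ContinuousOn.log
      · fun_prop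
      · intro t ht
        exact ne_of_gt (by linarith [ht.2] : (0:ℝ) < 1 - t)
    · apply ContinuousOn.div
      · fun_prop
      · fun_prop
      · intro t ht
        exact ne_of_gt (by linarith [ht.2] : (0:ℝ) < 2 - t)
  have key : MonotoneOn f (Set.Icc 0 x) := by
    apply monotoneOn_of_deriv_nonneg (convex_Icc 0 x) hcont
    · intro t ht
      rw [interior_Icc] at ht
      exact ((hderiv t ht).differentiableAt).differentiableWithinAt
    · intro t ht
      rw [interior_Icc] at ht
      rw [(hderiv t ht).deriv]
      have ht1 : (0:ℝ) < 1 - t := by linarith [ht.2]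
      have ht2 : (0:ℝ) < 2 - t := by linarith [ht.2]
      have h7 : 4/(2-t)^2 ≤ 1/(1-t) := by
        rw [div_le_div_iff₀ (by positivity) ht1]
        nlinarith [sq_nonneg t]
      linarith
  have h0 : f 0 ≤ f x := key ⟨le_refl 0, hx0.le⟩ ⟨hx0.le, le_refl x⟩ hx0.le
  have hf0 : f 0 = 0 := by simp [hf]
  have : 0 ≤ -Real.log (1 - x) - 2 * x / (2 - x) := by
    rw [← hf0]; simpa [hf] using h0
  linarith

/-- Upper bound `1/(-log(1-x)) ≤ 1/x - 1/2` for `x ∈ (0,1)`. -/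
lemma aux_fB {x : ℝ} (hx0 : 0 < x) (hx1 : x < 1) :
    1 / (-Real.log (1 - x)) ≤ 1 / x - 1 / 2 := by
  have hL : 0 < -Real.log (1 - x) := by
    have := Real.log_neg (by linarith) (by linarith : 1 - x < 1)
    linarith
  have hB := aux_logB hx0 hx1
  have h2x : (0:ℝ) < 2 - x := by linarith
  have hpos : (0:ℝ) < 2 * x / (2 - x) := div_pos (by linarith) h2x
  have h1 : 1 / (-Real.log (1 - x)) ≤ 1 / (2 * x / (2 - x)) :=
    one_div_le_one_div_of_le hpos hB
  have h2 : 1 / (2 * x / (2 - x)) = 1 / x - 1 / 2 := by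
    have e2 : (2:ℝ) - x ≠ 0 := ne_of_gt h2x
    have ex : x ≠ 0 := ne_of_gt hx0
    field_simp
    all_goals try ring
    all_goals left
    all_goals ring
  linarith

/-- Lower bound `1/x - 1 < 1/(-log(1-x))` for `x ∈ (0,1)`. -/
lemma aux_fA {x : ℝ} (hx0 : 0 < x) (hx1 : x < 1) :
    1 / x - 1 < 1 / (-Real.log (1 - x)) := by
  have h1x : (0:ℝ) < 1 - x := by linarith
  have hL : 0 < -Real.log (1 - x) := by
    have := Real.log_neg h1x (by linarith : 1 - x < 1)
    linarith
  have hA : -Real.log (1 - x) < x / (1 - x) := by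
    have h := Real.log_lt_sub_one_of_pos (x := (1 - x)⁻¹) (by positivity)
        (by
          intro h
          have : (1:ℝ) - x = 1 := by
            field_simp at h
            linarith
          linarith)
    rw [Real.log_inv] at h
    have : (1 - x)⁻¹ - 1 = x / (1 - x) := by field_simp; ring
    linarith
  have h2 : 1 / (x / (1 - x)) < 1 / (-Real.log (1 - x)) :=
    one_div_lt_one_div_of_lt hL hA
  have h3 : 1 / (x / (1 - x)) = 1 / x - 1 := by
    field_simp
  linarith

/-- **Example 1, inequality (4.16).** For `δ ∈ (0, 1/2)` and `ν ∈ (-1+2δ, 1-2δ)`: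
`1/|log(1-δ)| > 1/|log(1 - 2δ/(1+ν))| + 1/|log(1 - 2δ/(1-ν))|`. -/
theorem stmt_8 (δ ν : ℝ) (hδ0 : 0 < δ) (hδ1 : δ < 1 / 2)
    (hν1 : -1 + 2 * δ < ν) (hν2 : ν < 1 - 2 * δ) :
    1 / (-Real.log (1 - δ)) >
      1 / (-Real.log (1 - 2 * δ / (1 + ν))) + 1 / (-Real.log (1 - 2 * δ / (1 - ν))) := by
  have hp : (0:ℝ) < 1 + ν := by linarith
  have hm : (0:ℝ) < 1 - ν := by linarith
  set a : ℝ := 2 * δ / (1 + ν) with ha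
  set b : ℝ := 2 * δ / (1 - ν) with hb
  have ha0 : 0 < a := by positivity
  have hb0 : 0 < b := by positivity
  have ha1 : a < 1 := by
    rw [ha, div_lt_one hp]; linarith
  have hb1 : b < 1 := by
    rw [hb, div_lt_one hm]; linarith
  have hsum : 1 / a + 1 / b = 1 / δ := by
    rw [ha, hb]
    have e1 : (1:ℝ) + ν ≠ 0 := ne_of_gt hp
    have e2 : (1:ℝ) - ν ≠ 0 := ne_of_gt hm
    have e3 : δ ≠ 0 := ne_of_gt hδ0
    field_simp
    all_goals try ring
    all_goals left
    all_goals ring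
  have hA := aux_fA hδ0 (by linarith : δ < 1)
  have hBa := aux_fB ha0 ha1
  have hBb := aux_fB hb0 hb1
  linarith
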